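/- (Relative error of exponentially tilted Gaussian with perturbed proposal) Let p = N(μ, Σ) on ℝ^d with Σ positive definite, α ∈ ℝ^d, Z = E_p[e^{−α·X}]. The optimal proposal is p* = N(μ − Σα, Σ). For the perturbed proposal p̃^ε = N(μ − Σ(α+ε), Σ) with ε ∈ ℝ^d, the squared relative error satisfies r(p̃^ε)² = Var_{p̃^ε}( e^{−α·X̃} p(X̃)/p̃^ε(X̃) ) / Z² = e^{ε·Σε} − 1. -/

import Mathlib

open MeasureTheory ProbabilityTheory Real Matrix

noncomputable def gaussDensity (d : ℕ) (m : Fin d → ℝ) (S : Matrix (Fin d) (Fin d) ℝ)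
    (x : Fin d → ℝ) : ℝ :=
  (Real.sqrt ((2 * Real.pi) ^ d * S.det))⁻¹ *
    Real.exp (-(1 / 2) * ((x - m) ⬝ᵥ (S⁻¹ *ᵥ (x - m))))


lemma integrable1d (c : ℝ) : Integrable fun y : ℝ => Real.exp (c * y - y ^ 2 / 2) := by
  have h : (fun y : ℝ => Real.exp (c * y - y ^ 2 / 2))
      = fun y => Real.exp (c ^ 2 / 2) * Real.exp (-(1/2) * (y - c) ^ 2) := by
    funext y; rw [← Real.exp_add]; congr 1; ring
  rw [h]
  exact ((integrable_exp_neg_mul_sq (by norm_num : (0:ℝ) < 1/2)).comp_sub_right c).const_mul _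

lemma integral1d (c : ℝ) :
    ∫ y : ℝ, Real.exp (c * y - y ^ 2 / 2) = Real.sqrt (2 * π) * Real.exp (c ^ 2 / 2) := by
  have h : (fun y : ℝ => Real.exp (c * y - y ^ 2 / 2))
      = fun y => Real.exp (c ^ 2 / 2) * Real.exp (-(1/2) * (y - c) ^ 2) := by
    funext y; rw [← Real.exp_add]; congr 1; ring
  rw [h, integral_const_mul,
    integral_sub_right_eq_self (fun y => Real.exp (-(1/2) * y ^ 2)) c,
    integral_gaussian (1/2)]
  rw [show π / (1/2 : ℝ) = 2 * π by ring]
  ring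

lemma prodForm (d : ℕ) (b y : Fin d → ℝ) :
    Real.exp (b ⬝ᵥ y - y ⬝ᵥ y / 2) = ∏ i, Real.exp (b i * y i - (y i) ^ 2 / 2) := by
  rw [← Real.exp_sum]; congr 1
  simp [dotProduct, Finset.sum_sub_distrib, ← Finset.sum_div, pow_two]

lemma integrableStd (d : ℕ) (b : Fin d → ℝ) :
    Integrable fun y : Fin d → ℝ => Real.exp (b ⬝ᵥ y - y ⬝ᵥ y / 2) := by
  simp_rw [prodForm]
  exact Integrable.fintype_prod (fun i => integrable1d (b i))

lemma sqrtPow (d : ℕ) : Real.sqrt ((2 * π) ^ d) = Real.sqrt (2 * π) ^ d := by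
  have : ((2 * π) ^ d : ℝ) = (Real.sqrt (2 * π) ^ d) * (Real.sqrt (2 * π) ^ d) := by
    rw [← mul_pow, Real.mul_self_sqrt (by positivity)]
  rw [this, Real.sqrt_mul_self (by positivity)]

lemma integralStd (d : ℕ) (b : Fin d → ℝ) :
    ∫ y : Fin d → ℝ, Real.exp (b ⬝ᵥ y - y ⬝ᵥ y / 2)
      = Real.sqrt ((2 * π) ^ d) * Real.exp (b ⬝ᵥ b / 2) := by
  simp_rw [prodForm]
  rw [integral_fintype_prod_volume_eq_prod (fun i t => Real.exp (b i * t - t ^ 2 / 2))]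
  simp_rw [integral1d]
  rw [Finset.prod_mul_distrib, Finset.prod_const, ← Real.exp_sum, sqrtPow]
  congr 2
  · simp
  · simp [dotProduct, ← Finset.sum_div, pow_two]


lemma contGauss (d : ℕ) (m : Fin d → ℝ) (S : Matrix (Fin d) (Fin d) ℝ) :
    Continuous (gaussDensity d m S) := by
  unfold gaussDensity
  refine continuous_const.mul (Real.continuous_exp.comp (continuous_const.mul ?_))
  exact (continuous_id.sub continuous_const).dotProduct
    (Continuous.matrix_mulVec continuous_const (continuous_id.sub continuous_const))

lemma contExpDot (d : ℕ) (β : Fin d → ℝ) :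
    Continuous fun x : Fin d → ℝ => Real.exp (β ⬝ᵥ x) :=
  Real.continuous_exp.comp (continuous_const.dotProduct continuous_id)

open scoped MatrixOrder

lemma gauss_mgf (d : ℕ) (m β : Fin d → ℝ) (S : Matrix (Fin d) (Fin d) ℝ) (hS : S.PosDef) :
    Integrable (fun x : Fin d → ℝ => Real.exp (β ⬝ᵥ x) * gaussDensity d m S x) ∧
    ∫ x : Fin d → ℝ, Real.exp (β ⬝ᵥ x) * gaussDensity d m S x
      = Real.exp (β ⬝ᵥ m + β ⬝ᵥ (S *ᵥ β) / 2) := by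
  classical
  set R := CFC.sqrt S with hRdef
  have hRsd : R.PosSemidef := (CFC.sqrt_nonneg S).posSemidef
  have hRR : R * R = S := CFC.sqrt_mul_sqrt_self S hS.posSemidef.nonneg
  have hRsymm : Rᵀ = R := by
    have := hRsd.isHermitian
    rwa [Matrix.IsHermitian, Matrix.conjTranspose_eq_transpose_of_trivial] at this
  have hdetS : 0 < S.det := hS.det_pos
  have hdetR : R.det ≠ 0 := by
    intro h
    rw [← hRR, Matrix.det_mul, h, mul_zero] at hdetS
    exact lt_irrefl _ hdetS
  have hdne : |R.det| ≠ 0 := abs_ne_zero.mpr hdetR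
  have hsne : Real.sqrt ((2 * π) ^ d) ≠ 0 := by positivity
  have hRunit : IsUnit R.det := isUnit_iff_ne_zero.mpr hdetR
  have hSinv : S⁻¹ = R⁻¹ * R⁻¹ := by rw [← hRR, Matrix.mul_inv_rev]
  have hmv : ∀ y : Fin d → ℝ, R *ᵥ y = y ᵥ* R := by
    intro y
    conv_lhs => rw [← hRsymm]
    rw [Matrix.mulVec_transpose]
  have h2 : ∀ y : Fin d → ℝ, (R *ᵥ y) ⬝ᵥ (S⁻¹ *ᵥ (R *ᵥ y)) = y ⬝ᵥ y := by
    intro y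
    rw [hSinv, Matrix.mulVec_mulVec, show R⁻¹ * R⁻¹ * R = R⁻¹ by
      rw [Matrix.mul_assoc, Matrix.nonsing_inv_mul _ hRunit, Matrix.mul_one]]
    rw [Matrix.dotProduct_mulVec, hmv, Matrix.vecMul_vecMul,
      Matrix.mul_nonsing_inv _ hRunit, Matrix.vecMul_one]
  have h3 : ∀ y : Fin d → ℝ, β ⬝ᵥ (R *ᵥ y) = (R *ᵥ β) ⬝ᵥ y := by
    intro y; rw [Matrix.dotProduct_mulVec, hmv]
  have h4 : Real.sqrt ((2 * π) ^ d * S.det) = Real.sqrt ((2 * π) ^ d) * |R.det| := by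
    rw [← hRR, Matrix.det_mul, Real.sqrt_mul (by positivity), ← Real.sqrt_sq_eq_abs, pow_two]
  have hStrans : Sᵀ = S := by rw [← hRR, Matrix.transpose_mul, hRsymm]
  have h8 : (R *ᵥ β) ⬝ᵥ (R *ᵥ β) = β ⬝ᵥ (S *ᵥ β) := by
    rw [Matrix.dotProduct_mulVec, hmv, Matrix.vecMul_vecMul, hRR,
      ← Matrix.mulVec_transpose, hStrans, dotProduct_comm]
  set f : (Fin d → ℝ) → ℝ := fun x => Real.exp (β ⬝ᵥ x) * gaussDensity d m S x with hf
  have hfc : Continuous f := (contExpDot d β).mul (contGauss d m S)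
  have hpt : ∀ y : Fin d → ℝ,
      f (m + R *ᵥ y)
        = ((Real.sqrt ((2 * π) ^ d) * |R.det|)⁻¹ * Real.exp (β ⬝ᵥ m)) *
          Real.exp ((R *ᵥ β) ⬝ᵥ y - y ⬝ᵥ y / 2) := by
    intro y
    show Real.exp (β ⬝ᵥ (m + R *ᵥ y)) * gaussDensity d m S (m + R *ᵥ y) = _
    unfold gaussDensity
    rw [add_sub_cancel_left, h2 y, h4, dotProduct_add, h3 y]
    rw [mul_left_comm, ← Real.exp_add, mul_assoc, ← Real.exp_add]
    congr 2
    ring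
  set T : (Fin d → ℝ) →ₗ[ℝ] (Fin d → ℝ) := Matrix.toLin' R with hT
  have hdetT : LinearMap.det T = R.det := LinearMap.det_toLin' R
  have hTapp : ∀ y, T y = R *ᵥ y := fun y => Matrix.toLin'_apply R y
  have hTcont : Continuous T := LinearMap.continuous_on_pi T
  have hmap : Measure.map T volume = ENNReal.ofReal |R.det|⁻¹ • volume := by
    rw [Real.map_linearMap_volume_pi_eq_smul_volume_pi (by rw [hdetT]; exact hdetR), hdetT,
      abs_inv]
  set g : (Fin d → ℝ) → ℝ := fun x => f (m + x) with hg
  have hgc : Continuous g := hfc.comp (continuous_const.add continuous_id)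
  have hgT : ∀ y, g (T y) = f (m + R *ᵥ y) := by intro y; rw [hg, hTapp]
  have hintg : Integrable (fun y => g (T y)) volume := by
    simp only [hgT, hpt]
    exact (integrableStd d (R *ᵥ β)).const_mul _
  have hintg2 : Integrable g (Measure.map T volume) :=
    (integrable_map_measure hgc.aestronglyMeasurable hTcont.measurable.aemeasurable).mpr hintg
  have hintg3 : Integrable g volume := by
    rw [hmap] at hintg2
    exact (integrable_smul_measure (by simp [hdetR]) (by simp)).mp hintg2
  have hintf : Integrable f volume := by
    have hfg : f = fun x => g (-m + x) := by funext x; simp [hg]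
    rw [hfg]
    exact hintg3.comp_add_left (-m)
  refine ⟨hintf, ?_⟩
  have e1 : ∫ x, g x ∂(Measure.map T volume) = ∫ y, f (m + R *ᵥ y) := by
    rw [integral_map hTcont.measurable.aemeasurable hgc.aestronglyMeasurable]
    simp only [hgT]
  have e2 : ∫ x, g x ∂(Measure.map T volume) = |R.det|⁻¹ * ∫ x, f x := by
    rw [hmap, integral_smul_measure, ENNReal.toReal_ofReal (by positivity)]
    rw [show ∫ x, g x = ∫ x, f x from integral_add_left_eq_self f m]
    rfl
  have e3 : ∫ y, f (m + R *ᵥ y) =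
      ((Real.sqrt ((2 * π) ^ d) * |R.det|)⁻¹ * Real.exp (β ⬝ᵥ m)) *
        (Real.sqrt ((2 * π) ^ d) * Real.exp (β ⬝ᵥ (S *ᵥ β) / 2)) := by
    simp only [hpt]
    rw [integral_const_mul, integralStd d (R *ᵥ β), h8]
  have e4 : |R.det|⁻¹ * ∫ x, f x
      = ((Real.sqrt ((2 * π) ^ d) * |R.det|)⁻¹ * Real.exp (β ⬝ᵥ m)) *
        (Real.sqrt ((2 * π) ^ d) * Real.exp (β ⬝ᵥ (S *ᵥ β) / 2)) := by
    rw [← e2, e1, e3]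
  have h5 : ∫ x, f x = |R.det| * (|R.det|⁻¹ * ∫ x, f x) := by
    field_simp
  rw [h5, e4, Real.exp_add]
  field_simp

theorem gaussian_perturbed_relative_error (d : ℕ) (μ α ε : Fin d → ℝ)
    (S : Matrix (Fin d) (Fin d) ℝ) (hS : S.PosDef) (hSsymm : S.IsSymm)
    (p ptilde : Measure (Fin d → ℝ))
    (hp : p = volume.withDensity fun x => ENNReal.ofReal (gaussDensity d μ S x))
    (hpt : ptilde = volume.withDensity fun x =>
      ENNReal.ofReal (gaussDensity d (μ - S *ᵥ (α + ε)) S x))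
    (Z : ℝ) (hZ : Z = ∫ x, Real.exp (-(α ⬝ᵥ x)) ∂p) :
    variance (fun x => Real.exp (-(α ⬝ᵥ x)) *
        (gaussDensity d μ S x / gaussDensity d (μ - S *ᵥ (α + ε)) S x)) ptilde / Z ^ 2
      = Real.exp (ε ⬝ᵥ (S *ᵥ ε)) - 1 := by
  classical
  have hdetS : 0 < S.det := hS.det_pos
  have hSunit : IsUnit S.det := isUnit_iff_ne_zero.mpr hdetS.ne'
  set m' : Fin d → ℝ := μ - S *ᵥ (α + ε) with hm'
  set W : Matrix (Fin d) (Fin d) ℝ := S⁻¹ with hW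
  have hWtrans : Wᵀ = W := by
    rw [hW, Matrix.transpose_nonsing_inv, hSsymm.eq]
  have hWsym : ∀ u v : Fin d → ℝ, u ⬝ᵥ (W *ᵥ v) = v ⬝ᵥ (W *ᵥ u) := by
    intro u v
    rw [Matrix.dotProduct_mulVec, ← Matrix.mulVec_transpose, hWtrans, dotProduct_comm]
  have hSsymD : ∀ u v : Fin d → ℝ, u ⬝ᵥ (S *ᵥ v) = v ⬝ᵥ (S *ᵥ u) := by
    intro u v
    rw [Matrix.dotProduct_mulVec, ← Matrix.mulVec_transpose, hSsymm.eq, dotProduct_comm]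
  have hexpand : ∀ u v : Fin d → ℝ,
      (u - v) ⬝ᵥ (W *ᵥ (u - v)) = u ⬝ᵥ (W *ᵥ u) - 2 * (u ⬝ᵥ (W *ᵥ v)) + v ⬝ᵥ (W *ᵥ v) := by
    intro u v
    rw [Matrix.mulVec_sub, dotProduct_sub, sub_dotProduct,
      sub_dotProduct, hWsym v u]
    ring
  have hWv : W *ᵥ (S *ᵥ (α + ε)) = α + ε := by
    rw [hW, Matrix.mulVec_mulVec, Matrix.nonsing_inv_mul _ hSunit, Matrix.one_mulVec]
  set c0 : ℝ := Real.exp ((m' ⬝ᵥ (W *ᵥ m') - μ ⬝ᵥ (W *ᵥ μ)) / 2) with hc0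
  have key : ∀ x : Fin d → ℝ, Real.exp (-(α ⬝ᵥ x)) *
      (gaussDensity d μ S x / gaussDensity d m' S x) = c0 * Real.exp (ε ⬝ᵥ x) := by
    intro x
    have hKne : (Real.sqrt ((2 * Real.pi) ^ d * S.det))⁻¹ ≠ 0 := by positivity
    unfold gaussDensity
    rw [mul_div_mul_left _ _ hKne, ← Real.exp_sub, ← Real.exp_add, hc0, ← Real.exp_add]
    congr 1
    have e1 := hexpand x μ
    have e2 := hexpand x m'
    have e4 : x ⬝ᵥ (W *ᵥ m') = x ⬝ᵥ (W *ᵥ μ) - x ⬝ᵥ (α + ε) := by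
      rw [hm', Matrix.mulVec_sub, dotProduct_sub, hWv]
    have e5 : x ⬝ᵥ (α + ε) = α ⬝ᵥ x + ε ⬝ᵥ x := by
      rw [dotProduct_add, dotProduct_comm x α, dotProduct_comm x ε]
    rw [hW] at *
    linarith [e1, e2, e4, e5]
  set gd : (Fin d → ℝ) → ℝ := gaussDensity d m' S with hgd
  have hgnn : ∀ x, 0 ≤ gd x := by
    intro x; rw [hgd]; unfold gaussDensity; positivity
  have hgmeas : Measurable fun x => (gd x).toNNReal :=
    (contGauss d m' S).measurable.real_toNNReal
  have hconv : ∀ h : (Fin d → ℝ) → ℝ,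
      ∫ x, h x ∂ptilde = ∫ x, gd x * h x := by
    intro h
    rw [hpt]
    rw [show (fun x => ENNReal.ofReal (gaussDensity d m' S x))
        = (fun x => ((gd x).toNNReal : ENNReal)) from rfl]
    rw [integral_withDensity_eq_integral_smul hgmeas h]
    congr 1
    funext x
    rw [NNReal.smul_def, Real.coe_toNNReal _ (hgnn x), smul_eq_mul]
  have hint1 : ∀ β : Fin d → ℝ, Integrable (fun x => Real.exp (β ⬝ᵥ x)) ptilde := by
    intro β
    rw [hpt]
    rw [show (fun x => ENNReal.ofReal (gaussDensity d m' S x))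
        = (fun x => ((gd x).toNNReal : ENNReal)) from rfl]
    refine (integrable_withDensity_iff hgmeas.coe_nnreal_ennreal
      (Filter.Eventually.of_forall fun x => ENNReal.coe_lt_top)).mpr ?_
    have heq : (fun x => Real.exp (β ⬝ᵥ x) * (((gd x).toNNReal : ENNReal)).toReal)
        = fun x => Real.exp (β ⬝ᵥ x) * gaussDensity d m' S x := by
      funext x
      simp [Real.coe_toNNReal _ (hgnn x)]; rfl
    rw [heq]
    exact (gauss_mgf d m' β S hS).1
  have hprob : IsProbabilityMeasure ptilde := by
    constructor
    rw [hpt, withDensity_apply _ MeasurableSet.univ, Measure.restrict_univ]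
    have hone : ∫ x, gaussDensity d m' S x = 1 := by
      have h := (gauss_mgf d m' 0 S hS).2
      simpa using h
    have hint : Integrable (fun x => gaussDensity d m' S x) volume := by
      have h := (gauss_mgf d m' 0 S hS).1
      simpa using h
    rw [← ofReal_integral_eq_lintegral_ofReal hint
      (Filter.Eventually.of_forall fun x => hgnn x), hone]
    simp
  have hmom : ∀ β : Fin d → ℝ, ∫ x, Real.exp (β ⬝ᵥ x) ∂ptilde
      = Real.exp (β ⬝ᵥ m' + β ⬝ᵥ (S *ᵥ β) / 2) := by
    intro β
    rw [hconv]
    rw [show (fun x => gd x * Real.exp (β ⬝ᵥ x))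
        = fun x => Real.exp (β ⬝ᵥ x) * gaussDensity d m' S x from by
      funext x; rw [mul_comm]]
    exact (gauss_mgf d m' β S hS).2
  have hmem : MemLp (fun x => c0 * Real.exp (ε ⬝ᵥ x)) 2 ptilde := by
    refine (memLp_two_iff_integrable_sq
      ((continuous_const.mul (contExpDot d ε)).aestronglyMeasurable)).mpr ?_
    have heq : (fun x => (c0 * Real.exp (ε ⬝ᵥ x)) ^ 2)
        = fun x => c0 ^ 2 * Real.exp ((ε + ε) ⬝ᵥ x) := by
      funext x
      rw [add_dotProduct, Real.exp_add]
      ring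
    show Integrable (fun x => (c0 * Real.exp (ε ⬝ᵥ x)) ^ 2) ptilde
    rw [heq]
    exact (hint1 (ε + ε)).const_mul _
  have hFeq : (fun x => Real.exp (-(α ⬝ᵥ x)) *
      (gaussDensity d μ S x / gaussDensity d m' S x))
      = fun x => c0 * Real.exp (ε ⬝ᵥ x) := funext key
  have hA : ∫ x, c0 * Real.exp (ε ⬝ᵥ x) ∂ptilde
      = c0 * Real.exp (ε ⬝ᵥ m' + ε ⬝ᵥ (S *ᵥ ε) / 2) := by
    rw [integral_const_mul, hmom ε]
  have hvar : variance (fun x => c0 * Real.exp (ε ⬝ᵥ x)) ptilde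
      = (c0 * Real.exp (ε ⬝ᵥ m' + ε ⬝ᵥ (S *ᵥ ε) / 2)) ^ 2
        * (Real.exp (ε ⬝ᵥ (S *ᵥ ε)) - 1) := by
    rw [variance_eq_sub hmem]
    have hsq : (fun x => c0 * Real.exp (ε ⬝ᵥ x)) ^ 2
        = fun x => c0 ^ 2 * Real.exp ((ε + ε) ⬝ᵥ x) := by
      funext x
      simp only [Pi.pow_apply]
      rw [add_dotProduct, Real.exp_add]
      ring
    rw [hsq, integral_const_mul, hmom (ε + ε), hA]
    rw [show (ε + ε) ⬝ᵥ m' + (ε + ε) ⬝ᵥ (S *ᵥ (ε + ε)) / 2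
        = (ε ⬝ᵥ m' + ε ⬝ᵥ (S *ᵥ ε) / 2) + (ε ⬝ᵥ m' + ε ⬝ᵥ (S *ᵥ ε) / 2) + ε ⬝ᵥ (S *ᵥ ε) from by
      simp only [add_dotProduct, Matrix.mulVec_add, dotProduct_add]
      ring]
    rw [Real.exp_add, Real.exp_add]
    ring
  -- Z value
  have hZval : Z = Real.exp (-(α ⬝ᵥ μ) + α ⬝ᵥ (S *ᵥ α) / 2) := by
    have hgnnμ : ∀ x, 0 ≤ gaussDensity d μ S x := by
      intro x; unfold gaussDensity; positivity
    have hgmeasμ : Measurable fun x => (gaussDensity d μ S x).toNNReal :=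
      (contGauss d μ S).measurable.real_toNNReal
    rw [hZ, hp]
    rw [show (fun x => ENNReal.ofReal (gaussDensity d μ S x))
        = (fun x => (((gaussDensity d μ S x).toNNReal : ENNReal))) from rfl]
    rw [integral_withDensity_eq_integral_smul hgmeasμ]
    rw [show (fun x => (gaussDensity d μ S x).toNNReal • Real.exp (-(α ⬝ᵥ x)))
        = fun x => Real.exp ((-α) ⬝ᵥ x) * gaussDensity d μ S x from by
      funext x
      rw [NNReal.smul_def, Real.coe_toNNReal _ (hgnnμ x), smul_eq_mul, mul_comm,
        neg_dotProduct]]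
    rw [(gauss_mgf d μ (-α) S hS).2]
    congr 1
    rw [neg_dotProduct, Matrix.mulVec_neg, dotProduct_neg,
      neg_dotProduct, neg_neg]
  -- A = Z
  have hAZ : c0 * Real.exp (ε ⬝ᵥ m' + ε ⬝ᵥ (S *ᵥ ε) / 2) = Z := by
    rw [hc0, ← Real.exp_add, hZval]
    congr 1
    have f1 : m' ⬝ᵥ (W *ᵥ m') = μ ⬝ᵥ (W *ᵥ μ) - 2 * (μ ⬝ᵥ (α + ε))
        + (α + ε) ⬝ᵥ (S *ᵥ (α + ε)) := by
      rw [hm', hexpand μ (S *ᵥ (α + ε)), hWv,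
        dotProduct_comm (S *ᵥ (α + ε)) (α + ε)]
    have f2 : ε ⬝ᵥ m' = ε ⬝ᵥ μ - ε ⬝ᵥ (S *ᵥ (α + ε)) := by
      rw [hm', dotProduct_sub]
    have f3 : (α + ε) ⬝ᵥ (S *ᵥ (α + ε))
        = α ⬝ᵥ (S *ᵥ α) + α ⬝ᵥ (S *ᵥ ε) + ε ⬝ᵥ (S *ᵥ α) + ε ⬝ᵥ (S *ᵥ ε) := by
      rw [Matrix.mulVec_add, add_dotProduct, dotProduct_add,
        dotProduct_add]
      ring
    have f4 : ε ⬝ᵥ (S *ᵥ (α + ε)) = ε ⬝ᵥ (S *ᵥ α) + ε ⬝ᵥ (S *ᵥ ε) := by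
      rw [Matrix.mulVec_add, dotProduct_add]
    have f5 : α ⬝ᵥ (S *ᵥ ε) = ε ⬝ᵥ (S *ᵥ α) := hSsymD α ε
    have f6 : μ ⬝ᵥ (α + ε) = α ⬝ᵥ μ + ε ⬝ᵥ μ := by
      rw [dotProduct_add, dotProduct_comm μ α, dotProduct_comm μ ε]
    linarith [f1, f2, f3, f4, f5, f6]
  have hZpos : 0 < Z := by rw [hZval]; exact Real.exp_pos _
  rw [hFeq, hvar, hAZ]
  rw [mul_comm, mul_div_assoc, div_self (by positivity : Z ^ 2 ≠ 0), mul_one]
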